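/- arXiv:math/0010149 — 2 statements merged into one kernel-verified Lean document; each statement's English description precedes it below -/
import Mathlib

section
/- For all natural numbers n, 25 times the sum over i from 0 to n of C(n,i)·F_i^4 equals 3^n·L_{2n} - 4·(-1)^n·L_n + 6·2^n. -/
def lucas : ℕ → ℤ
  | 0 => 2
  | 1 => 1
  | n + 2 => lucas (n + 1) + lucas n

private def S (g : ℕ → ℤ) (n : ℕ) : ℤ := ∑ i ∈ Finset.range (n + 1), (n.choose i : ℤ) * g i

private lemma S_step (g : ℕ → ℤ) (n : ℕ) :
    S g (n + 1) = S (fun i => g i + g (i + 1)) n := by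
  unfold S
  rw [Finset.sum_range_succ' (fun i => ((n+1).choose i : ℤ) * g i)]
  have h1 : ∀ i, (((n+1).choose (i+1) : ℕ) : ℤ) = (n.choose i : ℤ) + (n.choose (i+1) : ℤ) := by
    intro i
    rw [Nat.choose_succ_succ]
    push_cast
    ring
  calc (∑ i ∈ Finset.range (n + 1), ((n+1).choose (i+1) : ℤ) * g (i+1)) + ((n+1).choose 0 : ℤ) * g 0
      = (∑ i ∈ Finset.range (n + 1), ((n.choose i : ℤ) * g (i+1) + (n.choose (i+1) : ℤ) * g (i+1)))
        + g 0 := by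
        simp only [h1, Nat.choose_zero_right, Nat.cast_one, one_mul, add_mul]
    _ = (∑ i ∈ Finset.range (n + 1), (n.choose i : ℤ) * g (i+1))
        + ((∑ i ∈ Finset.range (n + 1), (n.choose (i+1) : ℤ) * g (i+1)) + g 0) := by
        rw [Finset.sum_add_distrib]; ring
    _ = (∑ i ∈ Finset.range (n + 1), (n.choose i : ℤ) * g (i+1))
        + (∑ i ∈ Finset.range (n + 2), (n.choose i : ℤ) * g i) := by
        rw [Finset.sum_range_succ' (fun i => (n.choose i : ℤ) * g i)]
        simp
    _ = (∑ i ∈ Finset.range (n + 1), (n.choose i : ℤ) * g (i+1))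
        + (∑ i ∈ Finset.range (n + 1), (n.choose i : ℤ) * g i) := by
        rw [Finset.sum_range_succ (fun i => (n.choose i : ℤ) * g i)]
        simp
    _ = ∑ i ∈ Finset.range (n + 1), (n.choose i : ℤ) * (g i + g (i + 1)) := by
        rw [← Finset.sum_add_distrib]
        apply Finset.sum_congr rfl
        intros; ring

private def F (i : ℕ) : ℤ := (Nat.fib i : ℤ)

private lemma F_rec (i : ℕ) : F (i + 2) = F (i + 1) + F i := by
  unfold F
  rw [Nat.fib_add_two]
  push_cast
  ring

private def g1 (i : ℕ) : ℤ := F i ^ 4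
private def g2 (i : ℕ) : ℤ := F i ^ 3 * F (i+1)
private def g3 (i : ℕ) : ℤ := F i ^ 2 * F (i+1) ^ 2
private def g4 (i : ℕ) : ℤ := F i * F (i+1) ^ 3
private def g5 (i : ℕ) : ℤ := F (i+1) ^ 4

private lemma S_congr {g h : ℕ → ℤ} (hgh : ∀ i, g i = h i) (n : ℕ) : S g n = S h n := by
  unfold S; exact Finset.sum_congr rfl (fun i _ => by rw [hgh i])

private lemma S_lin (a b c d e : ℤ) (n : ℕ) :
    S (fun i => a * g1 i + b * g2 i + c * g3 i + d * g4 i + e * g5 i) n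
      = a * S g1 n + b * S g2 n + c * S g3 n + d * S g4 n + e * S g5 n := by
  unfold S
  simp only [Finset.mul_sum, ← Finset.sum_add_distrib]
  apply Finset.sum_congr rfl
  intros; ring

private lemma main (n : ℕ) :
    25 * S g1 n = 3 ^ n * lucas (2*n) - 4 * (-1:ℤ)^n * lucas n + 6 * 2 ^ n ∧
    25 * S g2 n = 3 ^ n * lucas (2*n+1) - (-1:ℤ)^n * lucas n - 2 * (-1:ℤ)^n * lucas (n+1) + 3 * 2 ^ n ∧
    25 * S g3 n = 3 ^ n * lucas (2*n) + 3 ^ n * lucas (2*n+1) - 2 * (-1:ℤ)^n * lucas (n+1) - 2 ^ n ∧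
    25 * S g4 n = 3 ^ n * lucas (2*n) + 2 * 3 ^ n * lucas (2*n+1) - (-1:ℤ)^n * lucas n + (-1:ℤ)^n * lucas (n+1) - 3 * 2 ^ n ∧
    25 * S g5 n = 2 * 3 ^ n * lucas (2*n) + 3 * 3 ^ n * lucas (2*n+1) + 4 * (-1:ℤ)^n * lucas n + 4 * (-1:ℤ)^n * lucas (n+1) + 6 * 2 ^ n := by
  induction n with
  | zero => simp [S, g1, g2, g3, g4, g5, F, lucas]
  | succ n ih =>
    obtain ⟨h1, h2, h3, h4, h5⟩ := ih
    have e1 : S g1 (n+1) = 1 * S g1 n + 0 * S g2 n + 0 * S g3 n + 0 * S g4 n + 1 * S g5 n := by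
      rw [S_step, ← S_lin]
      apply S_congr
      intro i
      simp only [g1, g5]; ring
    have e2 : S g2 (n+1) = 0 * S g1 n + 1 * S g2 n + 0 * S g3 n + 1 * S g4 n + 1 * S g5 n := by
      rw [S_step, ← S_lin]
      apply S_congr
      intro i
      simp only [g2, g4, g5, F_rec]; ring
    have e3 : S g3 (n+1) = 0 * S g1 n + 0 * S g2 n + 2 * S g3 n + 2 * S g4 n + 1 * S g5 n := by
      rw [S_step, ← S_lin]
      apply S_congr
      intro i
      simp only [g3, g4, g5, F_rec]; ring
    have e4 : S g4 (n+1) = 0 * S g1 n + 1 * S g2 n + 3 * S g3 n + 4 * S g4 n + 1 * S g5 n := by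
      rw [S_step, ← S_lin]
      apply S_congr
      intro i
      simp only [g2, g3, g4, g5, F_rec]; ring
    have e5 : S g5 (n+1) = 1 * S g1 n + 4 * S g2 n + 6 * S g3 n + 4 * S g4 n + 2 * S g5 n := by
      rw [S_step, ← S_lin]
      apply S_congr
      intro i
      simp only [g1, g2, g3, g4, g5, F_rec]; ring
    have hl1 : lucas (2*(n+1)) = lucas (2*n) + lucas (2*n+1) := by
      have h : 2*(n+1) = (2*n) + 2 := by ring
      rw [h, lucas]; ring
    have hl2 : lucas (2*(n+1)+1) = lucas (2*n) + 2 * lucas (2*n+1) := by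
      have h : 2*(n+1)+1 = (2*n+1) + 2 := by ring
      rw [h, lucas, show 2*n+1+1 = 2*n+2 from rfl, lucas]; ring
    have hl3 : lucas (n+2) = lucas (n+1) + lucas n := lucas.eq_3 n
    refine ⟨?_, ?_, ?_, ?_, ?_⟩
    · rw [e1, hl1]
      linear_combination h1 + h5
    · rw [e2, hl2, show n+1+1 = n+2 from rfl, hl3]
      linear_combination h2 + h4 + h5
    · rw [e3, hl1, hl2, show n+1+1 = n+2 from rfl, hl3]
      linear_combination 2*h3 + 2*h4 + h5
    · rw [e4, hl1, hl2, show n+1+1 = n+2 from rfl, hl3]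
      linear_combination h2 + 3*h3 + 4*h4 + h5
    · rw [e5, hl1, hl2, show n+1+1 = n+2 from rfl, hl3]
      linear_combination h1 + 4*h2 + 6*h3 + 4*h4 + 2*h5

theorem stmt_6 (n : ℕ) :
    25 * ∑ i ∈ Finset.range (n + 1), (n.choose i : ℤ) * (Nat.fib i : ℤ) ^ 4 =
      3 ^ n * lucas (2 * n) - 4 * (-1 : ℤ) ^ n * lucas n + 6 * 2 ^ n := by
  have := (main n).1
  unfold S g1 F at this
  exact this
end

section
/- For all natural numbers n, the alternating sum over i from 0 to n of (-1)^i·C(n,i)·F_i equals -F_n. -/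
lemma pascal_sum (f : ℕ → ℤ) (n : ℕ) :
    ∑ i ∈ Finset.range (n + 2), (-1 : ℤ) ^ i * ((n + 1).choose i : ℤ) * f i =
      ∑ i ∈ Finset.range (n + 1), (-1 : ℤ) ^ i * (n.choose i : ℤ) * f i
        - ∑ i ∈ Finset.range (n + 1), (-1 : ℤ) ^ i * (n.choose i : ℤ) * f (i + 1) := by
  rw [Finset.sum_range_succ' _ (n + 1)]
  have h1 : ∑ i ∈ Finset.range (n + 1), (-1 : ℤ) ^ (i + 1) * ((n + 1).choose (i + 1) : ℤ) * f (i + 1)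
      = ∑ i ∈ Finset.range (n + 1), ((-1 : ℤ) ^ (i + 1) * (n.choose i : ℤ) * f (i + 1)
        + (-1 : ℤ) ^ (i + 1) * (n.choose (i + 1) : ℤ) * f (i + 1)) := by
    apply Finset.sum_congr rfl
    intro i _
    have : ((n + 1).choose (i + 1) : ℤ) = (n.choose i : ℤ) + (n.choose (i + 1) : ℤ) := by
      exact_mod_cast Nat.choose_succ_succ n i
    rw [this]; ring
  rw [h1, Finset.sum_add_distrib]
  have h2 : ∑ i ∈ Finset.range (n + 1), (-1 : ℤ) ^ (i + 1) * (n.choose (i + 1) : ℤ) * f (i + 1)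
      = ∑ i ∈ Finset.range (n + 1), (-1 : ℤ) ^ i * (n.choose i : ℤ) * f i
        - (-1 : ℤ) ^ 0 * (n.choose 0 : ℤ) * f 0 := by
    rw [Finset.sum_range_succ' (fun i => (-1 : ℤ) ^ i * (n.choose i : ℤ) * f i) n]
    have : ∑ i ∈ Finset.range (n + 1), (-1 : ℤ) ^ (i + 1) * (n.choose (i + 1) : ℤ) * f (i + 1)
        = ∑ i ∈ Finset.range n, (-1 : ℤ) ^ (i + 1) * (n.choose (i + 1) : ℤ) * f (i + 1) := by
      rw [Finset.sum_range_succ]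
      simp [Nat.choose_succ_self]
    rw [this]; ring
  have h3 : ∑ i ∈ Finset.range (n + 1), (-1 : ℤ) ^ (i + 1) * (n.choose i : ℤ) * f (i + 1)
      = -∑ i ∈ Finset.range (n + 1), (-1 : ℤ) ^ i * (n.choose i : ℤ) * f (i + 1) := by
    rw [← Finset.sum_neg_distrib]
    apply Finset.sum_congr rfl
    intro i _; ring
  rw [h2, h3]
  simp
  ring

lemma joint (n : ℕ) :
    (∑ i ∈ Finset.range (n + 1), (-1 : ℤ) ^ i * (n.choose i : ℤ) * (Nat.fib i : ℤ) =
      -(Nat.fib n : ℤ)) ∧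
    (∑ i ∈ Finset.range (n + 1), (-1 : ℤ) ^ i * (n.choose i : ℤ) * (Nat.fib (i + 1) : ℤ) =
      (Nat.fib (n + 1) : ℤ) - (Nat.fib n : ℤ)) := by
  induction n with
  | zero => simp
  | succ n ih =>
    obtain ⟨hA, hB⟩ := ih
    constructor
    · rw [show n + 1 + 1 = n + 2 from rfl, pascal_sum (fun i => (Nat.fib i : ℤ)) n, hA, hB]
      ring
    · rw [show n + 1 + 1 = n + 2 from rfl, pascal_sum (fun i => (Nat.fib (i + 1) : ℤ)) n, hB]
      have : ∑ i ∈ Finset.range (n + 1), (-1 : ℤ) ^ i * (n.choose i : ℤ) * (Nat.fib (i + 1 + 1) : ℤ)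
          = ∑ i ∈ Finset.range (n + 1), ((-1 : ℤ) ^ i * (n.choose i : ℤ) * (Nat.fib i : ℤ)
            + (-1 : ℤ) ^ i * (n.choose i : ℤ) * (Nat.fib (i + 1) : ℤ)) := by
        apply Finset.sum_congr rfl
        intro i _
        push_cast [Nat.fib_add_two]
        ring
      rw [this, Finset.sum_add_distrib, hA, hB]
      push_cast [Nat.fib_add_two]
      ring

theorem stmt_9 (n : ℕ) :
    ∑ i ∈ Finset.range (n + 1), (-1 : ℤ) ^ i * (n.choose i : ℤ) * (Nat.fib i : ℤ) =
      -(Nat.fib n : ℤ) := by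
  exact (joint n).1
end
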